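/- arXiv:1204.4162 — 4 statements merged into one kernel-verified Lean document; each statement's English description precedes it below -/
import Mathlib

section
/- For a ≤ x real, f integrable on [a,x], and k ≥ 1 a natural number, the k-fold iterated integral of f from a satisfies ∫_a^x ∫_a^{t₁} ⋯ ∫_a^{t_{k-1}} f(t_k) dt_k ⋯ dt₂ dt₁ = (1/Γ(k)) ∫_a^x (x − t)^{k−1} f(t) dt. -/
open MeasureTheory intervalIntegral

/-- The `k`-fold iterated integral of `f` based at `a`. -/
noncomputable def iterInt (a : ℝ) (f : ℝ → ℝ) : ℕ → ℝ → ℝ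
  | 0, x => f x
  | k + 1, x => ∫ t in a..x, iterInt a f k t

lemma key_swap (a x : ℝ) (hax : a ≤ x) (f : ℝ → ℝ)
    (hf : IntegrableOn f (Set.Ioc a x)) (n : ℕ) :
    (∫ t in a..x, ∫ s in a..t, (t - s) ^ n * f s)
      = ∫ s in a..x, ((x - s) ^ (n + 1) / (n + 1)) * f s := by
  set μ : Measure ℝ := volume.restrict (Set.Ioc a x) with hμ
  set H : ℝ → ℝ → ℝ := fun t s => if s ≤ t then (t - s) ^ n * f s else 0 with hH
  have hH' : Function.uncurry H = fun p : ℝ × ℝ => if p.2 ≤ p.1 then (p.1 - p.2) ^ n * f p.2 else 0 := by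
    funext p; simp [hH, Function.uncurry]
  have hμfin : IsFiniteMeasure μ := by
    constructor; rw [hμ, Measure.restrict_apply_univ]; exact measure_Ioc_lt_top
  have hmeas : AEStronglyMeasurable (Function.uncurry H) (μ.prod μ) := by
    have : Function.uncurry H = Set.indicator {p : ℝ × ℝ | p.2 ≤ p.1}
        (fun p => (p.1 - p.2) ^ n * f p.2) := by
      funext p; simp [hH', hH, Function.uncurry, Set.indicator_apply]
    rw [this]
    refine AEStronglyMeasurable.indicator ?_ ?_
    · exact (((continuous_fst.sub continuous_snd).pow n).aestronglyMeasurable).mul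
        hf.aestronglyMeasurable.comp_snd
    · exact measurableSet_le measurable_snd measurable_fst
  have hbound : Integrable (fun p : ℝ × ℝ => (x - a) ^ n * |f p.2|) (μ.prod μ) :=
    (integrable_const ((x - a) ^ n)).mul_prod hf.norm
  have hint : Integrable (Function.uncurry H) (μ.prod μ) := by
    refine Integrable.mono' hbound hmeas ?_
    have hprod : μ.prod μ = (volume.prod volume).restrict
        ((Set.Ioc a x) ×ˢ (Set.Ioc a x)) := Measure.prod_restrict _ _
    rw [hprod]
    filter_upwards [ae_restrict_mem ((measurableSet_Ioc).prod measurableSet_Ioc)] with p hp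
    obtain ⟨⟨_, h1⟩, ⟨h2, _⟩⟩ := hp
    by_cases hle : p.2 ≤ p.1
    · simp only [Function.uncurry, hH, if_pos hle, Real.norm_eq_abs, abs_mul, abs_pow]
      gcongr
      rw [abs_of_nonneg (by linarith : (0:ℝ) ≤ p.1 - p.2)]
      linarith
    · simp only [Function.uncurry, hH, if_neg hle, norm_zero]
      have hxa : (0:ℝ) ≤ x - a := by linarith
      positivity
  have hswap := integral_integral_swap hint
  -- LHS equals the double integral
  have hL : (∫ t in a..x, ∫ s in a..t, (t - s) ^ n * f s)
      = ∫ t, (∫ s, H t s ∂μ) ∂μ := by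
    rw [intervalIntegral.integral_of_le hax]
    refine setIntegral_congr_ae measurableSet_Ioc ?_
    filter_upwards with t ht
    have h1 : (fun s => H t s) = Set.indicator (Set.Iic t)
        (fun s => (t - s) ^ n * f s) := by
      funext s; simp [hH, Set.indicator_apply]
    rw [h1, hμ, MeasureTheory.integral_indicator measurableSet_Iic,
      Measure.restrict_restrict measurableSet_Iic]
    have : Set.Iic t ∩ Set.Ioc a x = Set.Ioc a t := by
      ext s; simp only [Set.mem_inter_iff, Set.mem_Iic, Set.mem_Ioc]
      constructor
      · rintro ⟨h1, h2, h3⟩; exact ⟨h2, h1⟩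
      · rintro ⟨h1, h2⟩; exact ⟨h2, h1, le_trans h2 ht.2⟩
    rw [this, intervalIntegral.integral_of_le ht.1.le]
  -- RHS equals the swapped double integral
  have hR : (∫ s in a..x, ((x - s) ^ (n + 1) / (n + 1)) * f s)
      = ∫ s, (∫ t, H t s ∂μ) ∂μ := by
    rw [intervalIntegral.integral_of_le hax]
    refine setIntegral_congr_ae measurableSet_Ioc ?_
    filter_upwards with s hs
    have h1 : (fun t => H t s) = Set.indicator (Set.Ici s)
        (fun t => (t - s) ^ n * f s) := by
      funext t; simp [hH, Set.indicator_apply]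
    rw [h1, hμ, MeasureTheory.integral_indicator measurableSet_Ici,
      Measure.restrict_restrict measurableSet_Ici]
    have h2 : Set.Ici s ∩ Set.Ioc a x = Set.Icc s x := by
      ext t; simp only [Set.mem_inter_iff, Set.mem_Ici, Set.mem_Ioc, Set.mem_Icc]
      constructor
      · rintro ⟨h1, h2, h3⟩; exact ⟨h1, h3⟩
      · rintro ⟨h1, h2⟩; exact ⟨h1, lt_of_lt_of_le hs.1 h1, h2⟩
    rw [h2, integral_Icc_eq_integral_Ioc, ← intervalIntegral.integral_of_le hs.2]
    have h3 : (∫ t in s..x, (t - s) ^ n * f s) = (∫ t in s..x, (t - s) ^ n) * f s :=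
      intervalIntegral.integral_mul_const _ _
    rw [h3]
    have h4 : (∫ t in s..x, (t - s) ^ n) = (x - s) ^ (n + 1) / (n + 1) := by
      have := intervalIntegral.integral_comp_sub_right (fun u => u ^ n) s (a := s) (b := x)
      rw [this, integral_pow]
      simp
    rw [h4]
  rw [hL, hR, hswap]

lemma main_aux (a : ℝ) (f : ℝ → ℝ) (k : ℕ) (hk : 1 ≤ k) :
    ∀ x, a ≤ x → IntegrableOn f (Set.Icc a x) →
      iterInt a f k x = (1 / Real.Gamma k) * ∫ t in a..x, (x - t) ^ (k - 1) * f t := by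
  induction k, hk using Nat.le_induction with
  | base =>
    intro x hax hf
    simp [iterInt, Real.Gamma_one]
  | succ k hk ih =>
    intro x hax hf
    obtain ⟨m, rfl⟩ := Nat.exists_eq_succ_of_ne_zero (by omega : k ≠ 0)
    have h1 : iterInt a f (m + 1 + 1) x = ∫ t in a..x, iterInt a f (m + 1) t := rfl
    rw [h1]
    have h2 : (∫ t in a..x, iterInt a f (m + 1) t)
        = ∫ t in a..x, (1 / Real.Gamma (m + 1)) * ∫ s in a..t, (t - s) ^ m * f s := by
      refine intervalIntegral.integral_congr fun t ht => ?_
      rw [Set.uIcc_of_le hax] at ht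
      have := ih t ht.1 (hf.mono_set (Set.Icc_subset_Icc_right ht.2))
      simpa using this
    rw [h2, intervalIntegral.integral_const_mul,
      key_swap a x hax f (hf.mono_set Set.Ioc_subset_Icc_self) m]
    have h3 : (∫ s in a..x, ((x - s) ^ (m + 1) / (m + 1 : ℕ)) * f s)
        = ((m + 1 : ℝ))⁻¹ * ∫ s in a..x, (x - s) ^ (m + 1) * f s := by
      rw [← intervalIntegral.integral_const_mul]
      refine intervalIntegral.integral_congr fun s _ => ?_
      push_cast
      ring
    push_cast at h3 ⊢
    rw [h3]
    have hg1 : Real.Gamma ((m : ℝ) + 1) = m.factorial := by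
      exact_mod_cast Real.Gamma_nat_eq_factorial m
    have hg2 : Real.Gamma ((m : ℝ) + 1 + 1) = (m + 1).factorial := by
      have := Real.Gamma_nat_eq_factorial (m + 1)
      push_cast at this
      exact this
    rw [hg1, hg2]
    have hfac : ((m + 1).factorial : ℝ) = (m + 1) * m.factorial := by
      rw [Nat.factorial_succ]; push_cast; ring
    rw [hfac]
    have h4 : (m.factorial : ℝ) ≠ 0 := Nat.cast_ne_zero.2 m.factorial_ne_zero
    have h5 : ((m : ℝ) + 1) ≠ 0 := by positivity
    rw [one_div, one_div, mul_inv, ← mul_assoc, mul_comm ((m:ℝ)+1)⁻¹ ((m.factorial:ℝ))⁻¹]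

theorem cauchy_repeated_integration
    (a x : ℝ) (hax : a ≤ x) (f : ℝ → ℝ)
    (hf : IntegrableOn f (Set.Icc a x))
    (k : ℕ) (hk : 1 ≤ k) :
    iterInt a f k x =
      (1 / Real.Gamma k) * ∫ t in a..x, (x - t) ^ (k - 1) * f t := by
  exact main_aux a f k hk x hax hf
end

section
/- For every natural number l ≥ 1, ζ(2l) = (2^{2l−1}/(1 − 2^{2l})) · { [(−1)^{l+1}/(4l) + (−1)^l/2] · π^{2l}/(2l−1)! + ∑_{j=1}^{l−1} ((−1)^{l−j} · π^{2(l−j)} / (2(l−j))!) · ζ(2j) }, where the sum is empty (equal to 0) when l = 1. -/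
section ZetaRecAux
open PowerSeries Finset

open PowerSeries Finset


lemma zetaRec_ps_id : (PowerSeries.rescale (2:ℚ) (bernoulliPowerSeries ℚ)) * (PowerSeries.exp ℚ + 1)
    = 2 * bernoulliPowerSeries ℚ := by
  have hne : (PowerSeries.exp ℚ - 1) ≠ 0 := by
    intro h
    have := congrArg (PowerSeries.coeff (R := ℚ) 1) h
    simp [PowerSeries.coeff_exp] at this
  apply mul_right_cancel₀ hne
  have h2 : (PowerSeries.exp ℚ + 1) * (PowerSeries.exp ℚ - 1)
      = PowerSeries.rescale (2:ℚ) (PowerSeries.exp ℚ) - 1 := by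
    have := PowerSeries.exp_pow_eq_rescale_exp (A := ℚ) 2
    push_cast at this
    rw [← this]; ring
  rw [mul_assoc, h2]
  have h3 : PowerSeries.rescale (2:ℚ) (bernoulliPowerSeries ℚ) *
      (PowerSeries.rescale (2:ℚ) (PowerSeries.exp ℚ) - 1)
      = PowerSeries.rescale (2:ℚ) (bernoulliPowerSeries ℚ * (PowerSeries.exp ℚ - 1)) := by
    rw [map_mul, map_sub, map_one]
  rw [h3, bernoulliPowerSeries_mul_exp_sub_one, PowerSeries.rescale_X,
    mul_assoc, bernoulliPowerSeries_mul_exp_sub_one]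
  have : ((2 : PowerSeries ℚ)) = PowerSeries.C (2 : ℚ) := (map_ofNat (PowerSeries.C (R := ℚ)) 2).symm
  rw [this]

lemma zetaRec_sum_bern2 (n : ℕ) :
    ∑ k ∈ range (n+1), (n.choose k : ℚ) * 2^k * bernoulli k = (2 - 2^n) * bernoulli n := by
  have H := congrArg (PowerSeries.coeff (R := ℚ) n) zetaRec_ps_id
  rw [PowerSeries.coeff_mul, Finset.Nat.sum_antidiagonal_eq_sum_range_succ_mk] at H
  simp only [PowerSeries.coeff_rescale, bernoulliPowerSeries, PowerSeries.coeff_mk,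
    map_add, PowerSeries.coeff_exp, PowerSeries.coeff_one, Algebra.algebraMap_self,
    RingHom.id_apply, one_div] at H
  rw [two_mul, map_add, PowerSeries.coeff_mk] at H
  have hδ : ∑ x ∈ Finset.range n.succ,
      2 ^ x * (bernoulli x / ↑x.factorial) * (if n - x = 0 then (1:ℚ) else 0)
      = 2 ^ n * (bernoulli n / ↑n.factorial) := by
    rw [Finset.sum_eq_single_of_mem n (Finset.self_mem_range_succ n)]
    · simp
    · intro b hb hbn
      have hb' := Finset.mem_range.mp hb
      rw [if_neg (by omega : ¬ n - b = 0), mul_zero]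
  have H2 : ∑ x ∈ Finset.range n.succ,
      2 ^ x * (bernoulli x / ↑x.factorial) * ((↑(n - x).factorial)⁻¹ : ℚ)
      = (2 - 2^n) * (bernoulli n / ↑n.factorial) := by
    have := H
    simp only [mul_add, Finset.sum_add_distrib, hδ] at this
    linarith [this]
  have hfac : ∀ m : ℕ, (m.factorial : ℚ) ≠ 0 :=
    fun m => Nat.cast_ne_zero.mpr m.factorial_ne_zero
  calc ∑ k ∈ Finset.range (n+1), (n.choose k : ℚ) * 2^k * bernoulli k
      = ∑ k ∈ Finset.range n.succ, (n.factorial : ℚ) *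
          (2 ^ k * (bernoulli k / ↑k.factorial) * ((↑(n - k).factorial)⁻¹ : ℚ)) := by
        refine Finset.sum_congr rfl fun k hk => ?_
        rw [Nat.cast_choose ℚ (Nat.lt_succ_iff.mp (Finset.mem_range.mp hk))]
        field_simp
    _ = (n.factorial : ℚ) * ((2 - 2^n) * (bernoulli n / ↑n.factorial)) := by
        rw [← Finset.mul_sum, H2]
    _ = (2 - 2^n) * bernoulli n := by field_simp

lemma zetaRec_evenodd (g : ℕ → ℚ) (m : ℕ) :
    ∑ k ∈ range (2*m+1), g k
      = ∑ j ∈ range (m+1), g (2*j) + ∑ j ∈ range m, g (2*j+1) := by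
  induction m with
  | zero => simp
  | succ m ih =>
      have h1 : 2*(m+1)+1 = (2*m+1) + 1 + 1 := by ring
      rw [h1, Finset.sum_range_succ, Finset.sum_range_succ, ih,
        Finset.sum_range_succ (fun j => g (2*j)) (m+1),
        Finset.sum_range_succ (fun j => g (2*j+1)) m]
      have h2 : 2*m+1+1 = 2*(m+1) := by ring
      rw [h2]
      ring

lemma zetaRec_key2 (l : ℕ) (hl : 1 ≤ l) :
    ∑ j ∈ Finset.Icc 1 (l-1), (((2*l).choose (2*j)) : ℚ) * 2^(2*j) * bernoulli (2*j)
      = (2 - 2^(2*l) - 2^(2*l)) * bernoulli (2*l) + 2*l - 1 := by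
  set g : ℕ → ℚ := fun k => (((2*l).choose k) : ℚ) * 2^k * bernoulli k with hg
  have H : ∑ j ∈ range (l+1), g (2*j) + ∑ j ∈ range l, g (2*j+1)
      = (2 - 2^(2*l)) * bernoulli (2*l) := by
    rw [← zetaRec_evenodd g l]
    exact zetaRec_sum_bern2 (2*l)
  have hodd : ∑ j ∈ range l, g (2*j+1) = -(2*l : ℚ) := by
    rw [Finset.sum_eq_single_of_mem 0 (Finset.mem_range.mpr hl)]
    · simp [hg, bernoulli_one]
      ring
    · intro b hb hb0
      have : bernoulli (2*b+1) = 0 := by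
        rw [bernoulli_eq_bernoulli'_of_ne_one (by omega)]
        exact bernoulli'_eq_zero_of_odd ⟨b, by ring⟩ (by omega)
      simp [hg, this]
  have heven : ∑ j ∈ range (l+1), g (2*j)
      = 1 + (∑ j ∈ Finset.Icc 1 (l-1), g (2*j)) + 2^(2*l) * bernoulli (2*l) := by
    rw [Finset.sum_range_succ' (fun j => g (2*j))]
    have hIcc : ∑ j ∈ Finset.Icc 1 (l-1), g (2*j)
        = ∑ i ∈ range (l-1), g (2*(1+i)) := by
      rw [← Finset.Ico_add_one_right_eq_Icc, Finset.sum_Ico_eq_sum_range]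
      congr 1
    have hsplit : ∑ i ∈ range l, g (2*(i+1))
        = ∑ i ∈ range (l-1), g (2*(i+1)) + g (2*l) := by
      have : l = (l-1) + 1 := by omega
      rw [this, Finset.sum_range_succ]
      congr 2
    rw [hsplit, hIcc]
    have hg0 : g 0 = 1 := by simp [hg]
    have hgl : g (2*l) = 2^(2*l) * bernoulli (2*l) := by simp [hg]
    rw [hg0, hgl]
    have : ∀ i, g (2*(1+i)) = g (2*(i+1)) := fun i => by rw [add_comm]
    simp only [this]
    ring
  rw [heven, hodd] at H
  have : ∑ j ∈ Finset.Icc 1 (l-1), (((2*l).choose (2*j)) : ℚ) * 2^(2*j) * bernoulli (2*j)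
      = ∑ j ∈ Finset.Icc 1 (l-1), g (2*j) := by
    refine Finset.sum_congr rfl fun j hj => ?_
    simp [hg]
  rw [this]
  linarith [H]

open Real in
lemma zetaRec_tsum_zeta (k : ℕ) (hk : k ≠ 0) :
    (∑' n : ℕ, 1 / ((n : ℝ) + 1) ^ (2 * k))
      = (-1:ℝ)^(k+1) * 2^(2*k-1) * π^(2*k) * ((bernoulli (2*k) : ℚ) : ℝ)
        / ((2*k).factorial : ℝ) := by
  have h := hasSum_zeta_nat hk
  have h1 : HasSum (fun n : ℕ => 1 / (((n + 1 : ℕ)) : ℝ) ^ (2 * k))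
      ((-1:ℝ)^(k+1) * 2^(2*k-1) * π^(2*k) * ((bernoulli (2*k) : ℚ) : ℝ)
        / ((2*k).factorial : ℝ)) := by
    rw [hasSum_nat_add_iff (f := fun n : ℕ => 1 / (n : ℝ) ^ (2 * k)) 1]
    simpa [zero_pow (by omega : 2 * k ≠ 0)] using h
  have h2 : (fun n : ℕ => 1 / (((n + 1 : ℕ)) : ℝ) ^ (2 * k))
      = fun n : ℕ => 1 / ((n : ℝ) + 1) ^ (2 * k) := by
    funext n; push_cast; ring
  rw [← h2]
  exact h1.tsum_eq

end ZetaRecAux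

open Real

theorem zeta_even_recurrence (l : ℕ) (hl : 1 ≤ l) :
    (∑' n : ℕ, 1 / ((n : ℝ) + 1) ^ (2 * l)) =
      ((2 : ℝ) ^ (2 * l - 1) / (1 - (2 : ℝ) ^ (2 * l))) *
        (((-1 : ℝ) ^ (l + 1) / (4 * l) + (-1 : ℝ) ^ l / 2) *
            π ^ (2 * l) / (Nat.factorial (2 * l - 1) : ℝ) +
          ∑ j ∈ Finset.Icc 1 (l - 1),
            ((-1 : ℝ) ^ (l - j) * π ^ (2 * (l - j)) /
                (Nat.factorial (2 * (l - j)) : ℝ)) *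
              ∑' n : ℕ, 1 / ((n : ℝ) + 1) ^ (2 * j)) := by
  have hfac : ∀ m : ℕ, ((m.factorial : ℝ)) ≠ 0 :=
    fun m => Nat.cast_ne_zero.mpr m.factorial_ne_zero
  rw [zetaRec_tsum_zeta l (by omega)]
  have hsum : ∑ j ∈ Finset.Icc 1 (l-1),
        ((-1:ℝ)^(l-j) * π^(2*(l-j)) / (Nat.factorial (2*(l-j)) : ℝ)) *
          ∑' n : ℕ, 1 / ((n : ℝ) + 1) ^ (2 * j)
      = ((-1:ℝ)^(l+1) * π^(2*l) / (2 * ((2*l).factorial : ℝ))) *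
          ∑ j ∈ Finset.Icc 1 (l-1),
            (((2*l).choose (2*j) : ℝ) * 2^(2*j) * ((bernoulli (2*j) : ℚ) : ℝ)) := by
    rw [Finset.mul_sum]
    refine Finset.sum_congr rfl fun j hj => ?_
    obtain ⟨hj1, hj2⟩ := Finset.mem_Icc.mp hj
    rw [zetaRec_tsum_zeta j (by omega)]
    have e1 : (-1:ℝ)^(l-j) * (-1:ℝ)^(j+1) = (-1:ℝ)^(l+1) := by
      rw [← pow_add]; congr 1; omega
    have e2 : π^(2*l-2*j) * π^(2*j) = π^(2*l) := by
      rw [← pow_add]; congr 1; omega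
    have e3 : ((2*l).choose (2*j) : ℝ)
        = ((2*l).factorial : ℝ) / (((2*j).factorial : ℝ) * ((2*l - 2*j).factorial : ℝ)) :=
      Nat.cast_choose ℝ (by omega)
    have e4 : 2*(l-j) = 2*l - 2*j := by omega
    have e5 : (2:ℝ)^(2*j) = 2 * 2^(2*j-1) := by
      rw [← pow_succ']; congr 1; omega
    rw [e4, e3, ← e1, ← e2, e5]
    field_simp
  rw [hsum]
  have hkey : ∑ j ∈ Finset.Icc 1 (l-1),
        (((2*l).choose (2*j) : ℝ) * 2^(2*j) * ((bernoulli (2*j) : ℚ) : ℝ))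
      = (2 - 2^(2*l) - 2^(2*l)) * ((bernoulli (2*l) : ℚ) : ℝ) + 2*l - 1 := by
    have h := congrArg (Rat.cast : ℚ → ℝ) (zetaRec_key2 l hl)
    push_cast at h
    convert h using 2
  rw [hkey]
  have f1 : ((2*l).factorial : ℝ) = (2*(l:ℝ)) * ((2*l-1).factorial : ℝ) := by
    have h2l : 2*l = (2*l-1)+1 := by omega
    rw [h2l, Nat.factorial_succ]
    push_cast
    rw [show ((2*l-1 : ℕ) : ℝ) = 2*(l:ℝ) - 1 by push_cast [Nat.cast_sub (by omega : 1 ≤ 2*l)]; ring]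
    ring
  have f2 : (2:ℝ)^(2*l) = 2 * 2^(2*l-1) := by
    rw [← pow_succ']; congr 1; omega
  have f3 : (-1:ℝ)^l = -(-1:ℝ)^(l+1) := by
    rw [pow_succ]; ring
  have hne : (1 - (2:ℝ)^(2*l)) ≠ 0 := by
    have : (1:ℝ) < 2^(2*l) := one_lt_pow₀ (by norm_num) (by omega)
    intro h; linarith
  have hlne : ((l:ℝ)) ≠ 0 := Nat.cast_ne_zero.mpr (by omega)
  rw [f2, f3, f1] at *
  generalize (2:ℝ)^(2*l-1) = x at *
  have hy : (1 - 2*x)⁻¹ * (1 - 2*x) = 1 := inv_mul_cancel₀ hne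
  field_simp
  linear_combination (-8 * x * ((bernoulli (2*l) : ℚ) : ℝ)) * hy
end

section
/- For all natural numbers n ≥ 1, l ≥ 1 and all real x in [0, π], ∑_{k=1}^{n} cos(kx)/k^{2l} = (−1)^l I_{2l}(f)(x) + ∑_{j=1}^{l} (−1)^{l−j} I_{2(l−j)}(H_n^{(2j)})(x), where f(t) = −1/2 + sin((2n+1)t/2)/(2 sin(t/2)) (extended continuously at t = 0), H_n^{(m)} denotes the constant function ∑_{k=1}^{n} 1/k^m, and I_j(g)(x) = (1/Γ(j)) ∫_0^x (x−t)^{j−1} g(t) dt for j ≥ 1 with I_0(g)(x) = g(x). -/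
open Real

/-- Riemann–Liouville iterated integral operator based at `0`, with
`RL 0 g = g`. -/
noncomputable def RL (j : ℕ) (g : ℝ → ℝ) (x : ℝ) : ℝ :=
  if j = 0 then g x
  else (1 / Real.Gamma j) * ∫ t in (0:ℝ)..x, (x - t) ^ (j - 1) * g t


lemma ckt (k x : ℝ) (M : ℕ) : Continuous (fun t : ℝ => (x - t) ^ M * Real.cos (k * t)) :=
  ((continuous_const.sub continuous_id).pow M).mul
    (Real.continuous_cos.comp (continuous_const.mul continuous_id))

lemma skt (k x : ℝ) (M : ℕ) : Continuous (fun t : ℝ => (x - t) ^ M * Real.sin (k * t)) :=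
  ((continuous_const.sub continuous_id).pow M).mul
    (Real.continuous_sin.comp (continuous_const.mul continuous_id))

lemma dkt (k t : ℝ) : HasDerivAt (fun t : ℝ => k * t) k t := by
  simpa using (hasDerivAt_id t).const_mul k

lemma dpow (x t : ℝ) (M : ℕ) :
    HasDerivAt (fun t : ℝ => (x - t) ^ (M+1)) (-((M+1) * (x - t) ^ M)) t := by
  have := ((hasDerivAt_id t).const_sub x).fun_pow (M+1)
  simpa using this

lemma IS0 (k x : ℝ) (hk : k ≠ 0) :
    ∫ t in (0:ℝ)..x, Real.sin (k * t) = (1 - Real.cos (k * x)) / k := by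
  have h : ∀ t ∈ Set.uIcc (0:ℝ) x,
      HasDerivAt (fun t => -Real.cos (k * t) / k) (Real.sin (k * t)) t := by
    intro t _
    have := ((dkt k t).cos).fun_neg.div_const k
    refine this.congr_deriv ?_
    field_simp
  rw [intervalIntegral.integral_eq_sub_of_hasDerivAt h
    ((Real.continuous_sin.comp (continuous_const.mul continuous_id)).intervalIntegrable 0 x)]
  simp
  ring

lemma IC (k x : ℝ) (hk : k ≠ 0) (M : ℕ) :
    ∫ t in (0:ℝ)..x, (x - t) ^ (M+1) * Real.cos (k * t) =
      ((M+1) / k) * ∫ t in (0:ℝ)..x, (x - t) ^ M * Real.sin (k * t) := by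
  have h : ∀ t ∈ Set.uIcc (0:ℝ) x,
      HasDerivAt (fun t => (x - t) ^ (M+1) * Real.sin (k * t) / k)
        ((x - t) ^ (M+1) * Real.cos (k * t) - ((M+1)/k) * ((x - t) ^ M * Real.sin (k * t))) t := by
    intro t _
    have := ((dpow x t M).fun_mul (dkt k t).sin).div_const k
    refine this.congr_deriv ?_
    field_simp
    ring
  have := intervalIntegral.integral_eq_sub_of_hasDerivAt h
    (((ckt k x (M+1)).sub (continuous_const.mul (skt k x M))).intervalIntegrable 0 x)
  rw [intervalIntegral.integral_sub ((ckt k x (M+1)).intervalIntegrable 0 x)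
      ((continuous_const.fun_mul (skt k x M)).intervalIntegrable 0 x),
    intervalIntegral.integral_const_mul] at this
  simp at this
  linarith [this]

lemma IS (k x : ℝ) (hk : k ≠ 0) (M : ℕ) :
    ∫ t in (0:ℝ)..x, (x - t) ^ (M+1) * Real.sin (k * t) =
      x ^ (M+1) / k - ((M+1) / k) * ∫ t in (0:ℝ)..x, (x - t) ^ M * Real.cos (k * t) := by
  have h : ∀ t ∈ Set.uIcc (0:ℝ) x,
      HasDerivAt (fun t => -((x - t) ^ (M+1) * Real.cos (k * t)) / k)
        ((x - t) ^ (M+1) * Real.sin (k * t) + ((M+1)/k) * ((x - t) ^ M * Real.cos (k * t))) t := by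
    intro t _
    have := (((dpow x t M).fun_mul (dkt k t).cos).fun_neg).div_const k
    refine this.congr_deriv ?_
    field_simp
    ring
  have := intervalIntegral.integral_eq_sub_of_hasDerivAt h
    (((skt k x (M+1)).add (continuous_const.mul (ckt k x M))).intervalIntegrable 0 x)
  rw [intervalIntegral.integral_add ((skt k x (M+1)).intervalIntegrable 0 x)
      ((continuous_const.fun_mul (ckt k x M)).intervalIntegrable 0 x),
    intervalIntegral.integral_const_mul] at this
  simp at this
  have h2 : -(-x ^ (M+1) / k) = x ^ (M+1) / k := by ring
  rw [h2] at this
  linarith [this]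

lemma IC' (k x : ℝ) (hk : k ≠ 0) (M N : ℕ) (h : N = M + 1) :
    ∫ t in (0:ℝ)..x, (x - t) ^ N * Real.cos (k * t) =
      ((N:ℝ) / k) * ∫ t in (0:ℝ)..x, (x - t) ^ M * Real.sin (k * t) := by
  subst h; push_cast; exact IC k x hk M

lemma IS' (k x : ℝ) (hk : k ≠ 0) (M N : ℕ) (h : N = M + 1) :
    ∫ t in (0:ℝ)..x, (x - t) ^ N * Real.sin (k * t) =
      x ^ N / k - ((N:ℝ) / k) * ∫ t in (0:ℝ)..x, (x - t) ^ M * Real.cos (k * t) := by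
  subst h; push_cast; exact IS k x hk M

lemma G_closed (k x : ℝ) (hk : k ≠ 0) (m : ℕ) :
    (1 / ((2*m+1).factorial : ℝ)) * ∫ t in (0:ℝ)..x, (x - t) ^ (2*m+1) * Real.cos (k * t) =
      (-1:ℝ)^m * (1 - Real.cos (k*x)) / k^(2*(m+1)) +
        ∑ i ∈ Finset.range m,
          (-1:ℝ)^i * x^(2*(m-i)) / (((2*(m-i)).factorial : ℝ) * k^(2*(i+1))) := by
  induction m with
  | zero =>
    rw [IC' k x hk 0 1 rfl]
    simp only [pow_zero, one_mul]
    rw [IS0 k x hk]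
    norm_num
    rw [inv_mul_eq_div, div_div, ← pow_two]
  | succ m ih =>
    rw [IC' k x hk (2*m+2) (2*(m+1)+1) (by ring), IS' k x hk (2*m+1) (2*m+2) (by ring)]
    have hfac : ((2*m+1).factorial : ℝ) ≠ 0 := by
      exact_mod_cast Nat.factorial_ne_zero _
    have hI2 : (∫ t in (0:ℝ)..x, (x - t) ^ (2*m+1) * Real.cos (k * t)) =
        ((2*m+1).factorial : ℝ) * ((-1:ℝ)^m * (1 - Real.cos (k*x)) / k^(2*(m+1)) +
        ∑ i ∈ Finset.range m,
          (-1:ℝ)^i * x^(2*(m-i)) / (((2*(m-i)).factorial : ℝ) * k^(2*(i+1)))) := by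
      rw [← ih, ← mul_assoc, mul_one_div_cancel hfac, one_mul]
    rw [hI2]
    have hsum : ∑ i ∈ Finset.range (m+1),
        (-1:ℝ)^i * x^(2*(m+1-i)) / (((2*(m+1-i)).factorial : ℝ) * k^(2*(i+1)))
        = x^(2*(m+1))/(((2*(m+1)).factorial : ℝ) * k^2)
          - (1/k^2) * ∑ i ∈ Finset.range m,
            (-1:ℝ)^i * x^(2*(m-i)) / (((2*(m-i)).factorial : ℝ) * k^(2*(i+1))) := by
      rw [Finset.sum_range_succ']
      simp only [Nat.succ_sub_succ_eq_sub, Nat.sub_zero]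
      have hterm : ∀ i ∈ Finset.range m,
          (-1:ℝ)^(i+1) * x^(2*(m-i)) / (((2*(m-i)).factorial : ℝ) * k^(2*(i+1+1)))
            = -((1/k^2) * ((-1:ℝ)^i * x^(2*(m-i)) / (((2*(m-i)).factorial : ℝ) * k^(2*(i+1))))) := by
        intro i hi
        have hfi : (((2*(m-i)).factorial : ℝ)) ≠ 0 := by exact_mod_cast Nat.factorial_ne_zero _
        have hpow : k^(2*(i+1+1)) = k^(2*(i+1)) * k^2 := by ring
        rw [hpow, pow_succ]
        field_simp
      rw [Finset.sum_congr rfl hterm]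
      rw [show (∑ i ∈ Finset.range m,
          -((1/k^2) * ((-1:ℝ)^i * x^(2*(m-i)) / (((2*(m-i)).factorial : ℝ) * k^(2*(i+1))))))
          = -((1/k^2) * ∑ i ∈ Finset.range m,
          ((-1:ℝ)^i * x^(2*(m-i)) / (((2*(m-i)).factorial : ℝ) * k^(2*(i+1))))) by
        rw [Finset.mul_sum]; exact Finset.sum_neg_distrib _]
      rw [sub_eq_add_neg, add_comm]
      norm_num
    rw [hsum]
    have e1 : (2*(m+1)+1).factorial = (2*m+3) * ((2*m+2) * (2*m+1).factorial) := by
      rw [show 2*(m+1)+1 = (2*m+1)+1+1 by ring, Nat.factorial_succ, Nat.factorial_succ]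
    have e2 : (2*(m+1)).factorial = (2*m+2) * (2*m+1).factorial := by
      rw [show 2*(m+1) = (2*m+1)+1 by ring, Nat.factorial_succ]
    rw [e1, e2]
    push_cast
    have hk2 : k^2 ≠ 0 := pow_ne_zero _ hk
    field_simp
    ring

lemma sumCos (n : ℕ) (t : ℝ) :
    2 * Real.sin (t/2) * ∑ k ∈ Finset.Icc 1 n, Real.cos (k * t) =
      Real.sin ((2*n+1) * t/2) - Real.sin (t/2) := by
  induction n with
  | zero => norm_num
  | succ n ih =>
    rw [Finset.sum_Icc_succ_top (by omega : 1 ≤ n+1), mul_add, ih]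
    have h1 : ((2*(n+1:ℕ)+1):ℝ) * t/2 = ((n+1:ℕ):ℝ) * t + t/2 := by push_cast; ring
    have h2 : ((2*(n:ℕ)+1):ℝ) * t/2 = ((n+1:ℕ):ℝ) * t - t/2 := by push_cast; ring
    push_cast
    push_cast at h1 h2
    rw [h1, h2, Real.sin_add, Real.sin_sub]
    ring

lemma fval (n : ℕ) (t : ℝ) (ht0 : 0 ≤ t) (htpi : t ≤ π) :
    (if t = 0 then (n:ℝ)
      else -1 / 2 + Real.sin ((2 * n + 1) * t / 2) / (2 * Real.sin (t / 2))) =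
      ∑ k ∈ Finset.Icc 1 n, Real.cos (k * t) := by
  by_cases h : t = 0
  · subst h
    simp [Nat.card_Icc]
  · rw [if_neg h]
    have htpos : 0 < t := lt_of_le_of_ne ht0 (Ne.symm h)
    have hs : 0 < Real.sin (t/2) := by
      apply Real.sin_pos_of_pos_of_lt_pi (by linarith)
      have := Real.pi_pos
      linarith
    have hc := sumCos n t
    field_simp
    push_cast at hc ⊢
    simp only [mul_comm _ t] at hc ⊢
    linarith [hc]

lemma RLconst (m : ℕ) (c x : ℝ) :
    RL m (fun _ => c) x = c * x^m / (m.factorial : ℝ) := by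
  cases m with
  | zero => simp [RL]
  | succ m =>
    rw [RL, if_neg (by omega)]
    have hint : ∫ t in (0:ℝ)..x, (x - t) ^ m * c = c * x^(m+1) / (m+1) := by
      have h : ∀ t ∈ Set.uIcc (0:ℝ) x,
          HasDerivAt (fun t => -((x - t)^(m+1)) / (m+1) * c) ((x - t) ^ m * c) t := by
        intro t _
        have := ((dpow x t m).fun_neg.div_const (m+1)).mul_const c
        refine this.congr_deriv ?_
        field_simp
      have hcont : IntervalIntegrable (fun t => (x - t) ^ m * c) MeasureTheory.volume 0 x :=
        (((continuous_const.sub continuous_id).pow m).mul continuous_const).intervalIntegrable 0 x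
      have := intervalIntegral.integral_eq_sub_of_hasDerivAt h hcont
      simpa using this.trans (by field_simp; ring)
    simp only [Nat.add_sub_cancel]
    rw [hint]
    have : Real.Gamma ((m+1:ℕ):ℝ) = (m.factorial : ℝ) := by
      push_cast
      exact Real.Gamma_nat_eq_factorial m
    rw [this, Nat.factorial_succ]
    have h1 : (m.factorial : ℝ) ≠ 0 := by exact_mod_cast Nat.factorial_ne_zero _
    have h2 : ((m:ℝ)+1) ≠ 0 := by positivity
    push_cast
    field_simp

theorem cos_sum_rl_decomposition (n l : ℕ) (hn : 1 ≤ n) (hl : 1 ≤ l)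
    (x : ℝ) (hx : x ∈ Set.Icc 0 π) :
    ∑ k ∈ Finset.Icc 1 n, Real.cos (k * x) / (k : ℝ) ^ (2 * l) =
      (-1 : ℝ) ^ l *
          RL (2 * l)
            (fun t : ℝ =>
              if t = 0 then (n : ℝ)
              else -1 / 2 + Real.sin ((2 * n + 1) * t / 2) / (2 * Real.sin (t / 2)))
            x +
        ∑ j ∈ Finset.Icc 1 l,
          (-1 : ℝ) ^ (l - j) *
            RL (2 * (l - j)) (fun _ => ∑ k ∈ Finset.Icc 1 n, 1 / (k : ℝ) ^ (2 * j)) x := by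
  obtain ⟨hx0, hxpi⟩ := hx
  obtain ⟨m, rfl⟩ : ∃ m, l = m + 1 := ⟨l - 1, by omega⟩
  -- Step 1: the RL term of the Dirichlet kernel
  have h2l : ¬(2 * (m+1) = 0) := by omega
  have key : RL (2*(m+1))
      (fun t : ℝ =>
        if t = 0 then (n : ℝ)
        else -1 / 2 + Real.sin ((2 * n + 1) * t / 2) / (2 * Real.sin (t / 2))) x
      = ∑ k ∈ Finset.Icc 1 n,
          (1/((2*m+1).factorial : ℝ)) * ∫ t in (0:ℝ)..x, (x - t)^(2*m+1) * Real.cos (k * t) := by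
    rw [RL, if_neg h2l]
    have e : 2*(m+1) - 1 = 2*m+1 := by omega
    rw [e]
    have hcong : Set.EqOn
        (fun t => (x - t)^(2*m+1) * (if t = 0 then (n:ℝ)
          else -1 / 2 + Real.sin ((2 * n + 1) * t / 2) / (2 * Real.sin (t / 2))))
        (fun t => ∑ k ∈ Finset.Icc 1 n, (x - t)^(2*m+1) * Real.cos (k * t))
        (Set.uIcc 0 x) := by
      intro t ht
      rw [Set.uIcc_of_le hx0] at ht
      simp only
      rw [fval n t ht.1 (le_trans ht.2 hxpi), Finset.mul_sum]
    rw [intervalIntegral.integral_congr hcong]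
    have hfs := intervalIntegral.integral_finset_sum (μ := MeasureTheory.volume)
      (a := (0:ℝ)) (b := x) (s := Finset.Icc 1 n)
      (f := fun (k : ℕ) (t : ℝ) => (x - t)^(2*m+1) * Real.cos ((k:ℝ) * t))
      (fun k _ => (ckt (k:ℝ) x (2*m+1)).intervalIntegrable 0 x)
    rw [hfs]
    have hg : Real.Gamma ((2*(m+1) : ℕ) : ℝ) = ((2*m+1).factorial : ℝ) := by
      rw [show (((2*(m+1):ℕ)):ℝ) = ((2*m+1:ℕ):ℝ) + 1 by push_cast; ring]
      exact_mod_cast Real.Gamma_nat_eq_factorial (2*m+1)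
    rw [hg, Finset.mul_sum]
  rw [key]
  -- Step 2: closed form for each k
  have hG : ∀ k ∈ Finset.Icc 1 n,
      (1/((2*m+1).factorial : ℝ)) * ∫ t in (0:ℝ)..x, (x - t)^(2*m+1) * Real.cos (k * t)
      = (-1:ℝ)^m * (1 - Real.cos (k*x)) / (k:ℝ)^(2*(m+1)) +
        ∑ i ∈ Finset.range m,
          (-1:ℝ)^i * x^(2*(m-i)) / (((2*(m-i)).factorial : ℝ) * (k:ℝ)^(2*(i+1))) := by
    intro k hk
    have hk0 : ((k:ℝ)) ≠ 0 := by
      have : 1 ≤ k := (Finset.mem_Icc.mp hk).1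
      positivity
    exact G_closed (k:ℝ) x hk0 m
  rw [Finset.sum_congr rfl hG]
  -- Step 3: the constant RL terms
  have hH : ∀ j ∈ Finset.Icc 1 (m+1),
      (-1:ℝ)^(m+1-j) * RL (2*((m+1)-j))
        (fun _ => ∑ k ∈ Finset.Icc 1 n, 1 / (k : ℝ) ^ (2 * j)) x
      = (-1:ℝ)^(m+1-j) * ((∑ k ∈ Finset.Icc 1 n, 1 / (k : ℝ) ^ (2 * j)) *
          x^(2*((m+1)-j)) / (((2*((m+1)-j)).factorial : ℝ))) := by
    intro j hj
    rw [RLconst]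
  rw [Finset.sum_congr rfl hH]
  -- Step 4: algebra
  set H : ℕ → ℝ := fun j => ∑ k ∈ Finset.Icc 1 n, 1 / (k : ℝ) ^ (2 * j) with hHdef
  set L : ℝ := ∑ k ∈ Finset.Icc 1 n, Real.cos (k * x) / (k : ℝ) ^ (2 * (m+1)) with hLdef
  set S1 : ℝ := ∑ k ∈ Finset.Icc 1 n, (1 - Real.cos (k*x)) / (k:ℝ)^(2*(m+1)) with hS1def
  set S2 : ℝ := ∑ i ∈ Finset.range m,
      ((-1:ℝ)^i * x^(2*(m-i)) / (((2*(m-i)).factorial : ℝ))) * H (i+1) with hS2def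
  set S3 : ℝ := ∑ i ∈ Finset.range m,
      (-1:ℝ)^(m-i) * (H (i+1) * x^(2*(m-i)) / (((2*(m-i)).factorial : ℝ))) with hS3def
  have E1 : ∑ k ∈ Finset.Icc 1 n,
      ((-1:ℝ)^m * (1 - Real.cos (k*x)) / (k:ℝ)^(2*(m+1)) +
        ∑ i ∈ Finset.range m,
          (-1:ℝ)^i * x^(2*(m-i)) / (((2*(m-i)).factorial : ℝ) * (k:ℝ)^(2*(i+1))))
      = (-1:ℝ)^m * S1 + S2 := by
    rw [Finset.sum_add_distrib]
    congr 1
    · rw [hS1def, Finset.mul_sum]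
      apply Finset.sum_congr rfl
      intro k _
      rw [mul_div_assoc]
    · rw [Finset.sum_comm]
      apply Finset.sum_congr rfl
      intro i _
      rw [Finset.mul_sum]
      apply Finset.sum_congr rfl
      intro k _
      rw [← div_div, div_eq_mul_one_div]
  rw [E1]
  have E2 : ∑ j ∈ Finset.Icc 1 (m+1),
      (-1:ℝ)^(m+1-j) * (H j * x^(2*((m+1)-j)) / (((2*((m+1)-j)).factorial : ℝ)))
      = H (m+1) + S3 := by
    rw [Finset.sum_Icc_succ_top (by omega : 1 ≤ m+1)]
    rw [add_comm]
    congr 1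
    · simp
    · rw [← Finset.Ico_add_one_right_eq_Icc, Finset.sum_Ico_eq_sum_range]
      simp only [Nat.add_sub_cancel]
      apply Finset.sum_congr rfl
      intro i hi
      have e2 : m + 1 - (1 + i) = m - i := by omega
      rw [e2, add_comm 1 i]
  rw [E2]
  have hsq : ((-1:ℝ)^m)^2 = 1 := by
    rw [← pow_mul, mul_comm, pow_mul]
    norm_num
  have E3 : (-1:ℝ)^(m+1) * (-1)^m = -1 := by
    calc (-1:ℝ)^(m+1) * (-1)^m = -(((-1:ℝ)^m)^2) := by ring
    _ = -1 := by rw [hsq]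
  have E4 : S1 = H (m+1) - L := by
    rw [hS1def, hHdef, hLdef, ← Finset.sum_sub_distrib]
    apply Finset.sum_congr rfl
    intro k _
    rw [sub_div]
  have E5 : (-1:ℝ)^(m+1) * S2 + S3 = 0 := by
    rw [hS2def, hS3def, Finset.mul_sum, ← Finset.sum_add_distrib]
    apply Finset.sum_eq_zero
    intro i hi
    have hpar : (-1:ℝ)^(m-i) = (-1:ℝ)^(m+i) := by
      rw [show m + i = (m - i) + 2*i by
        have := Finset.mem_range.mp hi; omega, pow_add, pow_mul]
      norm_num
    rw [hpar, pow_add]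
    ring
  linear_combination (-S1) * E3 + E4 - E5
end

section
/- For every natural number n ≥ 1 and real x with 0 < x ≤ π, | ∫_0^{π/2} (t^s / sin t) · sin((2n+1)t) dt | ≤ (π/2)^s · 2/(2n+1), for every real s ≥ 1, where t^s/sin t is extended by 0 at t = 0. -/
open Real MeasureTheory intervalIntegral

namespace AbsIntAux

lemma sin_pos_of {t : ℝ} (h0 : 0 < t) (h2 : t ≤ π / 2) : 0 < Real.sin t :=
  Real.sin_pos_of_pos_of_lt_pi h0 (lt_of_le_of_lt h2 (by linarith [Real.pi_pos]))

lemma sin_ge_mul {t : ℝ} (h0 : 0 ≤ t) (h2 : t ≤ π / 2) : Real.sin t ≥ t * Real.cos t := by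
  rcases eq_or_lt_of_le h2 with h | h
  · subst h; simp [Real.cos_pi_div_two]
  rcases eq_or_lt_of_le h0 with h0' | h0'
  · subst h0'; simp
  have hc : 0 < Real.cos t := Real.cos_pos_of_mem_Ioo ⟨by linarith [Real.pi_pos], h⟩
  have := Real.lt_tan h0' h
  rw [Real.tan_eq_sin_div_cos] at this
  rw [lt_div_iff₀ hc] at this
  linarith

lemma G_le {s t : ℝ} (hs : 1 ≤ s) (h0 : 0 < t) (h2 : t ≤ π / 2) :
    t ^ s / Real.sin t ≤ (π / 2) ^ s := by
  have hπ := Real.pi_pos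
  have hsin := sin_pos_of h0 h2
  have hj : 2 / π * t ≤ Real.sin t := Real.mul_le_sin h0.le h2
  have h1 : t ^ s / Real.sin t ≤ t ^ s / (2 / π * t) := by
    apply div_le_div_of_nonneg_left (by positivity) (by positivity) hj
  refine h1.trans ?_
  have hts : t ^ s = t ^ (s - 1) * t := by
    rw [← Real.rpow_add_one h0.ne' (s - 1)]; congr 1; ring
  rw [hts]
  have h2' : t ^ (s - 1) ≤ (π / 2) ^ (s - 1) :=
    Real.rpow_le_rpow h0.le h2 (by linarith)
  have h3 : (π / 2) ^ s = (π / 2) ^ (s - 1) * (π / 2) := by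
    rw [← Real.rpow_add_one (by positivity : (π/2:ℝ) ≠ 0) (s - 1)]; congr 1; ring
  rw [h3]
  have : t ^ (s - 1) * t / (2 / π * t) = t ^ (s - 1) * (π / 2) := by
    field_simp
  rw [this]
  have : (0:ℝ) < π / 2 := by positivity
  nlinarith [Real.rpow_nonneg h0.le (s-1)]

noncomputable def G' (s t : ℝ) : ℝ :=
  (s * t ^ (s - 1) * Real.sin t - t ^ s * Real.cos t) / (Real.sin t) ^ 2

lemma hasDerivAt_G {s t : ℝ} (h0 : 0 < t) (h2 : t ≤ π / 2) :
    HasDerivAt (fun u : ℝ => u ^ s / Real.sin u) (G' s t) t := by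
  have hsin := sin_pos_of h0 h2
  have h1 : HasDerivAt (fun u : ℝ => u ^ s) (s * t ^ (s - 1)) t :=
    Real.hasDerivAt_rpow_const (Or.inl h0.ne')
  exact h1.div (Real.hasDerivAt_sin t) hsin.ne'

lemma G'_nonneg {s t : ℝ} (hs : 1 ≤ s) (h0 : 0 < t) (h2 : t ≤ π / 2) :
    0 ≤ G' s t := by
  have hsin := sin_pos_of h0 h2
  have hts : t ^ s = t ^ (s - 1) * t := by
    rw [← Real.rpow_add_one h0.ne' (s - 1)]; congr 1; ring
  have ht1 : 0 ≤ t ^ (s - 1) := Real.rpow_nonneg h0.le _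
  have hkey : Real.sin t ≥ t * Real.cos t := sin_ge_mul h0.le h2
  apply div_nonneg _ (sq_nonneg _)
  rw [hts]
  nlinarith [mul_nonneg ht1 (by linarith : (0:ℝ) ≤ Real.sin t - t * Real.cos t),
    mul_nonneg (mul_nonneg (by linarith : (0:ℝ) ≤ s - 1) ht1) hsin.le]

lemma G'_continuousOn {s ε : ℝ} (h0 : 0 < ε) :
    ContinuousOn (G' s) (Set.Icc ε (π / 2)) := by
  have hrpow : ∀ r : ℝ, ContinuousOn (fun t : ℝ => t ^ r) (Set.Icc ε (π / 2)) := by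
    intro r t ht
    exact (Real.continuousAt_rpow_const t r (Or.inl (by
      have := ht.1; intro h; rw [h] at this; linarith))).continuousWithinAt
  apply ContinuousOn.div
  · apply ContinuousOn.sub
    · exact (continuousOn_const.mul (hrpow (s-1))).mul Real.continuous_sin.continuousOn
    · exact (hrpow s).mul Real.continuous_cos.continuousOn
  · exact (Real.continuous_sin.continuousOn.pow 2)
  · intro t ht
    have := sin_pos_of (lt_of_lt_of_le h0 ht.1) ht.2
    positivity

/-- Integration-by-parts bound on `[ε, π/2]`. -/
lemma ibp_bound {s m ε : ℝ} (hs : 1 ≤ s) (hm : 1 ≤ m) (hε : 0 < ε) (hε2 : ε ≤ π / 2) :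
    |∫ t in ε..(π / 2), t ^ s / Real.sin t * Real.sin (m * t)| ≤ (π / 2) ^ s * (2 / m) := by
  have hπ := Real.pi_pos
  have hm0 : (0:ℝ) < m := by linarith
  set G : ℝ → ℝ := fun t => t ^ s / Real.sin t with hG
  set F : ℝ → ℝ := fun t => (1 - Real.cos (m * t)) / m with hF
  have hIcc : Set.uIcc ε (π / 2) = Set.Icc ε (π / 2) := Set.uIcc_of_le hε2
  have hmem : ∀ t ∈ Set.Icc ε (π / 2), 0 < t ∧ t ≤ π / 2 := fun t ht =>
    ⟨lt_of_lt_of_le hε ht.1, ht.2⟩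
  have hGd : ∀ t ∈ Set.uIcc ε (π / 2), HasDerivAt G (G' s t) t := by
    rw [hIcc]; intro t ht; exact hasDerivAt_G (hmem t ht).1 (hmem t ht).2
  have hFd : ∀ t ∈ Set.uIcc ε (π / 2), HasDerivAt F (Real.sin (m * t)) t := by
    intro t _
    have h1 : HasDerivAt (fun u : ℝ => m * u) m t := by
      simpa using (hasDerivAt_id t).const_mul m
    have h2 : HasDerivAt (fun u : ℝ => Real.cos (m * u)) (-Real.sin (m * t) * m) t :=
      (Real.hasDerivAt_cos (m * t)).comp t h1
    have h3 := ((hasDerivAt_const t (1:ℝ)).sub h2).div_const m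
    have h4 : (0 - -Real.sin (m * t) * m) / m = Real.sin (m * t) := by
      rw [div_eq_iff hm0.ne']; ring
    rw [h4] at h3
    exact h3
  have hG'int : IntervalIntegrable (G' s) volume ε (π / 2) :=
    (G'_continuousOn hε).intervalIntegrable_of_Icc hε2
  have hsinint : IntervalIntegrable (fun t => Real.sin (m * t)) volume ε (π / 2) :=
    (Real.continuous_sin.comp (continuous_const.mul continuous_id)).intervalIntegrable _ _
  have hibp := intervalIntegral.integral_mul_deriv_eq_deriv_mul hGd hFd hG'int hsinint
  -- FTC for ∫ G'
  have hftc : ∫ t in ε..(π / 2), G' s t = G (π / 2) - G ε :=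
    intervalIntegral.integral_eq_sub_of_hasDerivAt (by rw [← hIcc] at *; exact hGd) hG'int
  -- bounds on F
  have hFb : ∀ t, 0 ≤ F t ∧ F t ≤ 2 / m := by
    intro t
    have h1 := Real.cos_le_one (m * t)
    have h2 := Real.neg_one_le_cos (m * t)
    constructor
    · apply div_nonneg (by linarith) hm0.le
    · rw [div_le_div_iff₀ hm0 hm0]; nlinarith
  -- bounds on the G' * F integral
  have hGF_cont : ContinuousOn (fun t => G' s t * F t) (Set.Icc ε (π / 2)) :=
    (G'_continuousOn hε).mul (by fun_prop)
  have hGFint : IntervalIntegrable (fun t => G' s t * F t) volume ε (π / 2) :=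
    hGF_cont.intervalIntegrable_of_Icc hε2
  have hlow : 0 ≤ ∫ t in ε..(π / 2), G' s t * F t := by
    apply intervalIntegral.integral_nonneg hε2
    intro t ht
    exact mul_nonneg (G'_nonneg hs (hmem t ht).1 (hmem t ht).2) (hFb t).1
  have hhigh : (∫ t in ε..(π / 2), G' s t * F t) ≤ (G (π / 2) - G ε) * (2 / m) := by
    have := intervalIntegral.integral_mono_on hε2 hGFint
      (hG'int.mul_const (2 / m)) (fun t ht => by
        have hg := G'_nonneg hs (hmem t ht).1 (hmem t ht).2
        exact mul_le_mul_of_nonneg_left (hFb t).2 hg)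
    rw [intervalIntegral.integral_mul_const, hftc] at this
    exact this
  have hGb : G (π / 2) = (π / 2) ^ s := by
    simp [hG, Real.sin_pi_div_two]
  have hGε0 : 0 ≤ G ε := by
    have := sin_pos_of hε hε2
    apply div_nonneg (Real.rpow_nonneg hε.le s) this.le
  have hGεb : G ε ≤ G (π / 2) := by
    have h := hftc ▸ (intervalIntegral.integral_nonneg hε2 (fun t ht =>
      G'_nonneg hs (hmem t ht).1 (hmem t ht).2))
    linarith
  have hFε := hFb ε
  have hFb2 := hFb (π / 2)
  rw [hibp]
  rw [abs_le]
  constructor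
  · nlinarith [hGε0, hFε.1, hFε.2, hFb2.1, hFb2.2, hlow, hhigh, hGb, hGεb]
  · nlinarith [hGε0, hFε.1, hFε.2, hFb2.1, hFb2.2, hlow, hhigh, hGb, hGεb]

end AbsIntAux

open AbsIntAux

theorem abs_integral_rpow_div_sin_le (n : ℕ) (hn : 1 ≤ n) (x : ℝ)
    (hx0 : 0 < x) (hxπ : x ≤ π) (s : ℝ) (hs : 1 ≤ s) :
    |∫ t in (0:ℝ)..(π / 2),
        (if t = 0 then 0 else t ^ s / Real.sin t) * Real.sin ((2 * n + 1) * t)| ≤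
      (π / 2) ^ s * (2 / (2 * n + 1)) := by
  have hπ := Real.pi_pos
  set m : ℝ := 2 * (n:ℝ) + 1 with hm
  have hm1 : (1:ℝ) ≤ m := by
    have : (0:ℝ) ≤ (n:ℝ) := n.cast_nonneg
    simp only [hm]; linarith
  have hm0 : (0:ℝ) < m := by linarith
  -- the `if` is redundant
  have hif : ∀ t : ℝ, (if t = 0 then 0 else t ^ s / Real.sin t) = t ^ s / Real.sin t := by
    intro t
    split
    · next h => subst h; rw [Real.zero_rpow (by linarith : s ≠ 0)]; simp
    · rfl
  simp only [hif]
  set h : ℝ → ℝ := fun t => t ^ s / Real.sin t * Real.sin (m * t) with hh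
  -- boundedness
  have hbound : ∀ t ∈ Set.Ioc (0:ℝ) (π / 2), |h t| ≤ (π / 2) ^ s := by
    intro t ht
    have hG := G_le hs ht.1 ht.2
    have hG0 : 0 ≤ t ^ s / Real.sin t :=
      div_nonneg (Real.rpow_nonneg ht.1.le s) (sin_pos_of ht.1 ht.2).le
    rw [hh, abs_mul, abs_of_nonneg hG0]
    calc t ^ s / Real.sin t * |Real.sin (m * t)| ≤ (π / 2) ^ s * 1 := by
          apply mul_le_mul hG (abs_le.2 ⟨Real.neg_one_le_sin _, Real.sin_le_one _⟩)
            (abs_nonneg _) (Real.rpow_nonneg (by positivity) s)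
      _ = (π / 2) ^ s := mul_one _
  have hmeas : Measurable h := by
    apply Measurable.mul
    · exact (Real.continuous_rpow_const (by linarith)).measurable.div
        Real.continuous_sin.measurable
    · exact (Real.continuous_sin.comp (continuous_const.mul continuous_id)).measurable
  have hint : ∀ a b : ℝ, 0 ≤ a → b ≤ π / 2 → a ≤ b → IntervalIntegrable h volume a b := by
    intro a b ha hb hab
    rw [intervalIntegrable_iff_integrableOn_Ioc_of_le hab]
    apply Measure.integrableOn_of_bounded (measure_Ioc_lt_top).ne
      hmeas.aestronglyMeasurable
    filter_upwards [MeasureTheory.ae_restrict_mem measurableSet_Ioc] with t ht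
    exact hbound t ⟨lt_of_le_of_lt ha ht.1, le_trans ht.2 hb⟩
  refine le_of_forall_pos_le_add ?_
  intro ε hε
  have hps : (0:ℝ) < (π / 2) ^ s := Real.rpow_pos_of_pos (by positivity) s
  set δ : ℝ := min (π / 2) (ε / (π / 2) ^ s) with hδdef
  have hδ0 : 0 < δ := lt_min (by positivity) (by positivity)
  have hδ2 : δ ≤ π / 2 := min_le_left _ _
  have hsplit : (∫ t in (0:ℝ)..(π / 2), h t) =
      (∫ t in (0:ℝ)..δ, h t) + ∫ t in δ..(π / 2), h t :=
    (intervalIntegral.integral_add_adjacent_intervals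
      (hint 0 δ le_rfl hδ2 hδ0.le) (hint δ (π / 2) hδ0.le le_rfl hδ2)).symm
  have h1 : |∫ t in (0:ℝ)..δ, h t| ≤ (π / 2) ^ s * δ := by
    have := intervalIntegral.norm_integral_le_of_norm_le_const (C := (π / 2) ^ s)
      (f := h) (a := (0:ℝ)) (b := δ) (fun t ht => by
        rw [Set.uIoc_of_le hδ0.le] at ht
        exact hbound t ⟨ht.1, le_trans ht.2 hδ2⟩)
    rw [Real.norm_eq_abs] at this
    calc |∫ t in (0:ℝ)..δ, h t| ≤ (π / 2) ^ s * |δ - 0| := this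
      _ = (π / 2) ^ s * δ := by rw [sub_zero, abs_of_nonneg hδ0.le]
  have h2 : |∫ t in δ..(π / 2), h t| ≤ (π / 2) ^ s * (2 / m) :=
    ibp_bound hs hm1 hδ0 hδ2
  have hδε : (π / 2) ^ s * δ ≤ ε := by
    have : δ ≤ ε / (π / 2) ^ s := min_le_right _ _
    calc (π / 2) ^ s * δ ≤ (π / 2) ^ s * (ε / (π / 2) ^ s) := by
          exact mul_le_mul_of_nonneg_left this hps.le
      _ = ε := by field_simp
  calc |∫ t in (0:ℝ)..(π / 2), h t|
      ≤ |∫ t in (0:ℝ)..δ, h t| + |∫ t in δ..(π / 2), h t| := by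
        rw [hsplit]; exact abs_add_le _ _
    _ ≤ (π / 2) ^ s * δ + (π / 2) ^ s * (2 / m) := add_le_add h1 h2
    _ ≤ (π / 2) ^ s * (2 / m) + ε := by linarith
end
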